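/- arXiv:1402.4158 — 2 statements merged into one kernel-verified Lean document; each statement's English description precedes it below -/
import Mathlib

section
/- Let ρ > 0, λ > 0, U ∈ ℝ and K ∈ ℕ, and let g be the 1D Maxwellian distribution with these parameters. Set p = ρ/(2λ), γ = (K+3)/(K+1), and E = (1/2) ρ U² + p/(γ−1). Then the energy flux moment of g equals the Euler energy flux: ∫_{ℝ × ℝ^K} u · (1/2)(u² + ‖ξ‖²) · g(u, ξ) du dξ = U (E + p). -/
open MeasureTheory Real

lemma gauss_integrable (n : ℕ) {b : ℝ} (hb : 0 < b) :
    Integrable (fun x : ℝ => x ^ n * Real.exp (-b * x ^ 2)) := by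
  have h : (-1 : ℝ) < (n : ℝ) := lt_of_lt_of_le (by norm_num) (Nat.cast_nonneg n)
  simpa [Real.rpow_natCast] using integrable_rpow_mul_exp_neg_mul_sq hb h


lemma gauss_m2 {b : ℝ} (hb : 0 < b) :
    ∫ x : ℝ, x ^ 2 * Real.exp (-b * x ^ 2) = Real.sqrt (π / b) / (2 * b) := by
  have h1 : ∫ x : ℝ, x ^ 2 * Real.exp (-b * x ^ 2)
      = 2 * ∫ x in Set.Ioi (0 : ℝ), x ^ 2 * Real.exp (-b * x ^ 2) := by
    rw [← integral_comp_abs (f := fun x => x ^ 2 * Real.exp (-b * x ^ 2))]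
    simp [sq_abs]
  have h2 := integral_rpow_mul_exp_neg_mul_rpow (p := 2) (q := 2) (b := b)
    (by norm_num) (by norm_num) hb
  simp_rw [show (2 : ℝ) = ((2 : ℕ) : ℝ) by norm_num, Real.rpow_natCast] at h2
  norm_num at h2
  have hΓ : Real.Gamma ((3:ℝ)/2) = Real.sqrt π / 2 := by
    rw [show (3/2 : ℝ) = 1/2 + 1 by norm_num, Real.Gamma_add_one (by norm_num),
      Real.Gamma_one_half_eq]
    ring
  have hb32 : b ^ (-(3/2 : ℝ)) = (Real.sqrt b * b)⁻¹ := by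
    rw [Real.rpow_neg hb.le, show (3/2:ℝ) = 1/2 + 1 by norm_num, Real.rpow_add hb,
      Real.rpow_one, ← Real.sqrt_eq_rpow]
  have hsq : Real.sqrt (π / b) = Real.sqrt π / Real.sqrt b := Real.sqrt_div pi_pos.le b
  have hsb : (0:ℝ) < Real.sqrt b := Real.sqrt_pos.mpr hb
  rw [h1]
  simp only [neg_mul] at h2 ⊢
  rw [h2, hΓ, hb32, hsq]
  field_simp

lemma norm_sq_eq {K : ℕ} (ξ : EuclideanSpace ℝ (Fin K)) : ‖ξ‖ ^ 2 = ∑ i, (ξ i) ^ 2 := by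
  rw [EuclideanSpace.norm_eq, Real.sq_sqrt (by positivity)]
  simp [sq_abs]

lemma xi_transfer {K : ℕ} (g : (Fin K → ℝ) → ℝ) :
    ∫ ξ : EuclideanSpace ℝ (Fin K), g (fun i => ξ i) = ∫ x : Fin K → ℝ, g x := by
  have hmp := EuclideanSpace.volume_preserving_symm_measurableEquiv_toLp (ι := Fin K)
  rw [← hmp.integral_comp (MeasurableEquiv.toLp 2 (Fin K → ℝ)).symm.measurableEmbedding g]
  rfl

lemma xi_transfer_int {K : ℕ} (g : (Fin K → ℝ) → ℝ) (hg : Integrable g) :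
    Integrable (fun ξ : EuclideanSpace ℝ (Fin K) => g (fun i => ξ i)) := by
  have hmp := EuclideanSpace.volume_preserving_symm_measurableEquiv_toLp (ι := Fin K)
  exact (hmp.integrable_comp_emb
    (MeasurableEquiv.toLp 2 (Fin K → ℝ)).symm.measurableEmbedding).mpr hg

lemma prod_split {K : ℕ} {b : ℝ} (j : Fin K) (x : Fin K → ℝ) :
    (x j) ^ 2 * ∏ i, Real.exp (-b * (x i) ^ 2)
      = ∏ i, (if i = j then (x i) ^ 2 * Real.exp (-b * (x i) ^ 2)
          else Real.exp (-b * (x i) ^ 2)) := by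
  have : ∀ i : Fin K, (if i = j then (x i) ^ 2 * Real.exp (-b * (x i) ^ 2)
      else Real.exp (-b * (x i) ^ 2))
      = (if i = j then (x i) ^ 2 else 1) * Real.exp (-b * (x i) ^ 2) := by
    intro i; split <;> simp
  simp_rw [this, Finset.prod_mul_distrib, Finset.prod_ite_eq' Finset.univ j (fun i => (x i)^2)]
  simp

lemma xi2 {K : ℕ} {b : ℝ} (hb : 0 < b) :
    ∫ ξ : EuclideanSpace ℝ (Fin K), ‖ξ‖ ^ 2 * Real.exp (-b * ‖ξ‖ ^ 2)
      = (K : ℝ) / (2 * b) * Real.sqrt (π / b) ^ K := by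
  have hS : (0:ℝ) < Real.sqrt (π / b) := Real.sqrt_pos.mpr (by positivity)
  have h : ∀ ξ : EuclideanSpace ℝ (Fin K),
      ‖ξ‖ ^ 2 * Real.exp (-b * ‖ξ‖ ^ 2)
      = ∑ j, ∏ i, (if i = j then (ξ i) ^ 2 * Real.exp (-b * (ξ i) ^ 2)
          else Real.exp (-b * (ξ i) ^ 2)) := by
    intro ξ
    have he : Real.exp (-b * ‖ξ‖ ^ 2) = ∏ i, Real.exp (-b * (ξ i) ^ 2) := by
      rw [norm_sq_eq, ← Real.exp_sum, Finset.mul_sum]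
    rw [he, norm_sq_eq, Finset.sum_mul]
    exact Finset.sum_congr rfl fun j _ => prod_split j ξ
  simp_rw [h]
  rw [xi_transfer (fun x => ∑ j, ∏ i, (if i = j then (x i) ^ 2 * Real.exp (-b * (x i) ^ 2)
      else Real.exp (-b * (x i) ^ 2)))]
  have hint : ∀ j ∈ Finset.univ, Integrable (fun x : Fin K → ℝ =>
      ∏ i, (if i = j then (x i) ^ 2 * Real.exp (-b * (x i) ^ 2)
        else Real.exp (-b * (x i) ^ 2))) := by
    intro j _
    exact Integrable.fintype_prod (𝕜 := ℝ)
      (f := fun i x => if i = j then x ^ 2 * Real.exp (-b * x ^ 2) else Real.exp (-b * x ^ 2))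
      (fun i => by
        by_cases hij : i = j
        · simp only [hij, if_true]; exact gauss_integrable 2 hb
        · simp only [if_neg hij]; simpa using gauss_integrable 0 hb)
  rw [integral_finset_sum Finset.univ hint]
  have key : ∀ j : Fin K,
      (∫ x : Fin K → ℝ, ∏ i, (if i = j then (x i) ^ 2 * Real.exp (-b * (x i) ^ 2)
        else Real.exp (-b * (x i) ^ 2)))
      = 1 / (2 * b) * Real.sqrt (π / b) ^ K := by
    intro j
    rw [MeasureTheory.integral_fintype_prod_volume_eq_prod (ι := Fin K)
      (fun i x => if i = j then x ^ 2 * Real.exp (-b * x ^ 2) else Real.exp (-b * x ^ 2))]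
    have : ∀ i : Fin K, (∫ x : ℝ, if i = j then x ^ 2 * Real.exp (-b * x ^ 2)
        else Real.exp (-b * x ^ 2))
        = (if i = j then Real.sqrt (π/b) / (2*b) / Real.sqrt (π/b) else 1) * Real.sqrt (π/b) := by
      intro i
      by_cases hij : i = j
      · simp only [if_pos hij]; rw [gauss_m2 hb]; field_simp
      · simp only [if_neg hij]; rw [integral_gaussian, one_mul]
    simp_rw [this, Finset.prod_mul_distrib, Finset.prod_ite_eq' Finset.univ j
      (fun _ => Real.sqrt (π/b) / (2*b) / Real.sqrt (π/b))]
    simp only [Finset.mem_univ, if_true, Finset.prod_const, Finset.card_univ, Fintype.card_fin]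
    field_simp
  simp_rw [key]
  rw [Finset.sum_const, Finset.card_univ, Fintype.card_fin, nsmul_eq_mul]
  ring

lemma gauss_odd {b : ℝ} {n : ℕ} (hn : Odd n) :
    ∫ x : ℝ, x ^ n * Real.exp (-b * x ^ 2) = 0 := by
  have h := integral_neg_eq_self (fun x : ℝ => x ^ n * Real.exp (-b * x ^ 2)) volume
  simp only [hn.neg_pow, neg_sq, neg_mul, integral_neg] at h
  simp only [neg_mul] at *
  linarith

lemma xi0 {K : ℕ} {b : ℝ} (hb : 0 < b) :
    ∫ ξ : EuclideanSpace ℝ (Fin K), Real.exp (-b * ‖ξ‖ ^ 2) = Real.sqrt (π / b) ^ K := by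
  have h : ∀ ξ : EuclideanSpace ℝ (Fin K),
      Real.exp (-b * ‖ξ‖ ^ 2) = ∏ i, Real.exp (-b * (ξ i) ^ 2) := by
    intro ξ
    rw [norm_sq_eq, ← Real.exp_sum, Finset.mul_sum]
  simp_rw [h]
  rw [xi_transfer (fun x => ∏ i, Real.exp (-b * (x i) ^ 2)),
    MeasureTheory.integral_fintype_prod_volume_eq_pow (ι := Fin K) (fun x : ℝ => Real.exp (-b * x ^ 2)),
    integral_gaussian]
  simp

lemma gauss_poly_integrable {b : ℝ} (hb : 0 < b) (U : ℝ) (n : ℕ) :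
    Integrable (fun u : ℝ => u ^ n * Real.exp (-b * (u - U) ^ 2)) := by
  have h : Integrable (fun x : ℝ => (x + U) ^ n * Real.exp (-b * x ^ 2)) := by
    have heq : (fun x : ℝ => (x + U) ^ n * Real.exp (-b * x ^ 2))
        = fun x => ∑ k ∈ Finset.range (n + 1),
            ((n.choose k : ℝ) * U ^ (n - k)) * (x ^ k * Real.exp (-b * x ^ 2)) := by
      funext x
      rw [add_pow, Finset.sum_mul]
      exact Finset.sum_congr rfl fun k _ => by ring
    rw [heq]
    exact integrable_finset_sum _ (fun k _ => (gauss_integrable k hb).const_mul _)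
  have h2 := h.comp_sub_right U
  simpa using h2

lemma gauss_shift (b U : ℝ) (k : ℕ) :
    ∫ u : ℝ, (u - U) ^ k * Real.exp (-b * (u - U) ^ 2)
      = ∫ x : ℝ, x ^ k * Real.exp (-b * x ^ 2) :=
  integral_sub_right_eq_self (fun x : ℝ => x ^ k * Real.exp (-b * x ^ 2)) U

lemma J1 {b : ℝ} (hb : 0 < b) (U : ℝ) :
    ∫ u : ℝ, u * Real.exp (-b * (u - U) ^ 2) = U * Real.sqrt (π / b) := by
  have hdecomp : ∀ u : ℝ, u * Real.exp (-b * (u - U) ^ 2)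
      = (u - U) ^ 1 * Real.exp (-b * (u - U) ^ 2)
        + U * ((u - U) ^ 0 * Real.exp (-b * (u - U) ^ 2)) := by
    intro u; ring
  simp_rw [hdecomp]
  rw [integral_add ((gauss_integrable 1 hb).comp_sub_right U)
    (((gauss_integrable 0 hb).comp_sub_right U).const_mul U),
    integral_const_mul, gauss_shift, gauss_shift, gauss_odd (n := 1) ⟨0, by norm_num⟩]
  simp only [pow_zero, one_mul, zero_add]
  rw [integral_gaussian]

lemma J3 {b : ℝ} (hb : 0 < b) (U : ℝ) :
    ∫ u : ℝ, u ^ 3 * Real.exp (-b * (u - U) ^ 2)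
      = U ^ 3 * Real.sqrt (π / b) + 3 * U * (Real.sqrt (π / b) / (2 * b)) := by
  have i3 : Integrable (fun u : ℝ => (u - U) ^ 3 * Real.exp (-b * (u - U) ^ 2)) :=
    (gauss_integrable 3 hb).comp_sub_right U
  have i2 : Integrable (fun u : ℝ => 3 * U * ((u - U) ^ 2 * Real.exp (-b * (u - U) ^ 2))) :=
    ((gauss_integrable 2 hb).comp_sub_right U).const_mul _
  have i1 : Integrable (fun u : ℝ => 3 * U ^ 2 * ((u - U) ^ 1 * Real.exp (-b * (u - U) ^ 2))) :=
    ((gauss_integrable 1 hb).comp_sub_right U).const_mul _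
  have i0 : Integrable (fun u : ℝ => U ^ 3 * ((u - U) ^ 0 * Real.exp (-b * (u - U) ^ 2))) :=
    ((gauss_integrable 0 hb).comp_sub_right U).const_mul _
  have i32 : Integrable (fun u : ℝ => (u - U) ^ 3 * Real.exp (-b * (u - U) ^ 2)
      + 3 * U * ((u - U) ^ 2 * Real.exp (-b * (u - U) ^ 2))) := i3.add i2
  have i10 : Integrable (fun u : ℝ => 3 * U ^ 2 * ((u - U) ^ 1 * Real.exp (-b * (u - U) ^ 2))
      + U ^ 3 * ((u - U) ^ 0 * Real.exp (-b * (u - U) ^ 2))) := i1.add i0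
  have hdecomp : ∀ u : ℝ, u ^ 3 * Real.exp (-b * (u - U) ^ 2)
      = ((u - U) ^ 3 * Real.exp (-b * (u - U) ^ 2)
        + 3 * U * ((u - U) ^ 2 * Real.exp (-b * (u - U) ^ 2)))
        + (3 * U ^ 2 * ((u - U) ^ 1 * Real.exp (-b * (u - U) ^ 2))
        + U ^ 3 * ((u - U) ^ 0 * Real.exp (-b * (u - U) ^ 2))) := by
    intro u; ring
  simp_rw [hdecomp]
  rw [integral_add i32 i10, integral_add i3 i2, integral_add i1 i0,
    integral_const_mul, integral_const_mul, integral_const_mul,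
    gauss_shift, gauss_shift, gauss_shift, gauss_shift,
    gauss_m2 hb, gauss_odd (n := 3) ⟨1, by norm_num⟩, gauss_odd (n := 1) ⟨0, by norm_num⟩]
  simp only [pow_zero, one_mul, zero_add]
  rw [integral_gaussian]
  ring

lemma xi0_int {K : ℕ} {b : ℝ} (hb : 0 < b) :
    Integrable (fun ξ : EuclideanSpace ℝ (Fin K) => Real.exp (-b * ‖ξ‖ ^ 2)) := by
  have h : (fun ξ : EuclideanSpace ℝ (Fin K) => Real.exp (-b * ‖ξ‖ ^ 2))
      = fun ξ => (fun x : Fin K → ℝ => ∏ i, Real.exp (-b * (x i) ^ 2)) (fun i => ξ i) := by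
    funext ξ
    simp only
    rw [norm_sq_eq, ← Real.exp_sum, Finset.mul_sum]
  rw [h]
  exact xi_transfer_int _ (Integrable.fintype_prod (𝕜 := ℝ)
    (f := fun _ x => Real.exp (-b * x ^ 2))
    (fun _ => by simpa using gauss_integrable 0 hb))

set_option maxHeartbeats 1000000 in
lemma xi2_int {K : ℕ} {b : ℝ} (hb : 0 < b) :
    Integrable (fun ξ : EuclideanSpace ℝ (Fin K) => ‖ξ‖ ^ 2 * Real.exp (-b * ‖ξ‖ ^ 2)) := by
  have h : (fun ξ : EuclideanSpace ℝ (Fin K) => ‖ξ‖ ^ 2 * Real.exp (-b * ‖ξ‖ ^ 2))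
      = fun ξ => (fun x : Fin K → ℝ => ∑ j, ∏ i,
          (if i = j then (x i) ^ 2 * Real.exp (-b * (x i) ^ 2)
            else Real.exp (-b * (x i) ^ 2))) (fun i => ξ i) := by
    funext ξ
    simp only
    have he : Real.exp (-b * ‖ξ‖ ^ 2) = ∏ i, Real.exp (-b * (ξ i) ^ 2) := by
      rw [norm_sq_eq, ← Real.exp_sum, Finset.mul_sum]
    rw [he, norm_sq_eq, Finset.sum_mul]
    exact Finset.sum_congr rfl fun j _ => prod_split j ξ
  rw [h]
  refine xi_transfer_int (fun x : Fin K → ℝ => ∑ j, ∏ i,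
      (if i = j then (x i) ^ 2 * Real.exp (-b * (x i) ^ 2)
        else Real.exp (-b * (x i) ^ 2)))
    (integrable_finset_sum _ (fun j _ => ?_))
  exact Integrable.fintype_prod (𝕜 := ℝ)
    (f := fun i x => if i = j then x ^ 2 * Real.exp (-b * x ^ 2) else Real.exp (-b * x ^ 2))
    (fun i => by
      by_cases hij : i = j
      · simp only [hij, if_true]; exact gauss_integrable 2 hb
      · simp only [if_neg hij]; simpa using gauss_integrable 0 hb)

theorem maxwellian_energy_flux_moment
    (ρ lam U : ℝ) (K : ℕ) (hρ : 0 < ρ) (hlam : 0 < lam)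
    (g : ℝ × EuclideanSpace ℝ (Fin K) → ℝ)
    (hg : ∀ (u : ℝ) (ξ : EuclideanSpace ℝ (Fin K)),
      g (u, ξ) = ρ * (lam / π) ^ (((K : ℝ) + 1) / 2) *
        Real.exp (-lam * ((u - U) ^ 2 + ‖ξ‖ ^ 2)))
    (p γ E : ℝ) (hp : p = ρ / (2 * lam)) (hγ : γ = ((K : ℝ) + 3) / ((K : ℝ) + 1))
    (hE : E = (1 / 2) * ρ * U ^ 2 + p / (γ - 1)) :
    ∫ q : ℝ × EuclideanSpace ℝ (Fin K),
      q.1 * ((1 / 2) * (q.1 ^ 2 + ‖q.2‖ ^ 2)) * g q = U * (E + p) := by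
  set A := ρ * (lam / π) ^ (((K : ℝ) + 1) / 2) with hA
  set S := Real.sqrt (π / lam) with hSdef
  have hint1 : Integrable (fun q : ℝ × EuclideanSpace ℝ (Fin K) =>
      (q.1 ^ 3 * Real.exp (-lam * (q.1 - U) ^ 2)) * Real.exp (-lam * ‖q.2‖ ^ 2)) :=
    (gauss_poly_integrable hlam U 3).mul_prod (xi0_int hlam)
  have hint2 : Integrable (fun q : ℝ × EuclideanSpace ℝ (Fin K) =>
      (q.1 * Real.exp (-lam * (q.1 - U) ^ 2)) * (‖q.2‖ ^ 2 * Real.exp (-lam * ‖q.2‖ ^ 2))) := by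
    have : Integrable (fun q : ℝ × EuclideanSpace ℝ (Fin K) =>
        (q.1 ^ 1 * Real.exp (-lam * (q.1 - U) ^ 2)) * (‖q.2‖ ^ 2 * Real.exp (-lam * ‖q.2‖ ^ 2))) :=
      (gauss_poly_integrable hlam U 1).mul_prod (xi2_int (K := K) hlam)
    simpa using this
  have hint1c : Integrable (fun q : ℝ × EuclideanSpace ℝ (Fin K) =>
      (A / 2) * ((q.1 ^ 3 * Real.exp (-lam * (q.1 - U) ^ 2)) * Real.exp (-lam * ‖q.2‖ ^ 2))) :=
    hint1.const_mul _
  have hint2c : Integrable (fun q : ℝ × EuclideanSpace ℝ (Fin K) =>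
      (A / 2) * ((q.1 * Real.exp (-lam * (q.1 - U) ^ 2))
        * (‖q.2‖ ^ 2 * Real.exp (-lam * ‖q.2‖ ^ 2)))) :=
    hint2.const_mul _
  have hsplit : ∀ q : ℝ × EuclideanSpace ℝ (Fin K),
      q.1 * ((1 / 2) * (q.1 ^ 2 + ‖q.2‖ ^ 2)) * g q
      = (A / 2) * ((q.1 ^ 3 * Real.exp (-lam * (q.1 - U) ^ 2)) * Real.exp (-lam * ‖q.2‖ ^ 2))
        + (A / 2) * ((q.1 * Real.exp (-lam * (q.1 - U) ^ 2))
            * (‖q.2‖ ^ 2 * Real.exp (-lam * ‖q.2‖ ^ 2))) := by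
    rintro ⟨u, ξ⟩
    rw [hg u ξ]
    rw [show -lam * ((u - U) ^ 2 + ‖ξ‖ ^ 2)
        = (-lam * (u - U) ^ 2) + (-lam * ‖ξ‖ ^ 2) by ring, Real.exp_add]
    ring
  simp_rw [hsplit]
  rw [integral_add hint1c hint2c, integral_const_mul, integral_const_mul]
  rw [MeasureTheory.Measure.volume_eq_prod ℝ (EuclideanSpace ℝ (Fin K))]
  rw [integral_prod_mul (fun u : ℝ => u ^ 3 * Real.exp (-lam * (u - U) ^ 2))
      (fun ξ : EuclideanSpace ℝ (Fin K) => Real.exp (-lam * ‖ξ‖ ^ 2)),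
    integral_prod_mul (fun u : ℝ => u * Real.exp (-lam * (u - U) ^ 2))
      (fun ξ : EuclideanSpace ℝ (Fin K) => ‖ξ‖ ^ 2 * Real.exp (-lam * ‖ξ‖ ^ 2))]
  rw [J3 hlam U, J1 hlam U, xi0 hlam, xi2 hlam]
  have hAS : A * S ^ (K + 1) = ρ := by
    have hpow : S ^ (K + 1) = (π / lam) ^ (((K : ℝ) + 1) / 2) := by
      rw [hSdef, Real.sqrt_eq_rpow, ← Real.rpow_natCast ((π / lam) ^ ((1 : ℝ) / 2)) (K + 1),
        ← Real.rpow_mul (by positivity)]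
      congr 1
      push_cast
      ring
    rw [hA, hpow, mul_assoc, ← Real.mul_rpow (by positivity) (by positivity),
      show lam / π * (π / lam) = 1 by field_simp, Real.one_rpow, mul_one]
  have hLHS : A / 2 * ((U ^ 3 * S + 3 * U * (S / (2 * lam))) * S ^ K)
      + A / 2 * (U * S * ((K : ℝ) / (2 * lam) * S ^ K))
      = (A * S ^ (K + 1)) / 2 * (U ^ 3 + 3 * U / (2 * lam) + (K : ℝ) * U / (2 * lam)) := by
    rw [pow_succ]
    field_simp
    ring
  rw [hLHS, hAS, hE, hp, hγ]
  have hK1 : ((K : ℝ) + 1) ≠ 0 := by positivity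
  have hγ1 : ((K : ℝ) + 3) / ((K : ℝ) + 1) - 1 = 2 / ((K : ℝ) + 1) := by
    field_simp
    norm_num
  rw [hγ1]
  field_simp
  ring
end

section
/- Let ρ > 0, λ > 0, U ∈ ℝ and K ∈ ℕ, let g be the 1D Maxwellian distribution with these parameters, and let ψ₁(u,ξ) = 1, ψ₂(u,ξ) = u, ψ₃(u,ξ) = (1/2)(u² + ‖ξ‖²). Given any coefficients a₁, a₂, a₃ ∈ ℝ, define a(u,ξ) = a₁ + a₂ u + a₃ (1/2)(u² + ‖ξ‖²). Then there exist unique coefficients A₁, A₂, A₃ ∈ ℝ such that, with A(u,ξ) = A₁ + A₂ u + A₃ (1/2)(u² + ‖ξ‖²), the compatibility conditions ∫_{ℝ × ℝ^K} (a(u,ξ) u + A(u,ξ)) ψ_α(u,ξ) g(u,ξ) du dξ = 0 hold for α = 1, 2, 3. -/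
open MeasureTheory Real

private lemma mon1d {lam : ℝ} (hlam : 0 < lam) (U : ℝ) (n : ℕ) :
    Integrable (fun u : ℝ => u ^ n * Real.exp (-lam * (u - U) ^ 2)) := by
  have h2 : ∀ k : ℕ, Integrable (fun x : ℝ => x ^ k * Real.exp (-lam * x ^ 2)) := by
    intro k
    have := integrable_rpow_mul_exp_neg_mul_sq hlam
      (lt_of_lt_of_le (by norm_num : (-1:ℝ) < 0) (Nat.cast_nonneg k))
    simpa [Real.rpow_natCast] using this
  have h3 : ∀ k : ℕ, Integrable (fun u : ℝ => (u - U) ^ k * Real.exp (-lam * (u - U) ^ 2)) :=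
    fun k => (h2 k).comp_sub_right U
  have key : ∀ u : ℝ, u ^ n * Real.exp (-lam * (u - U) ^ 2) =
      ∑ k ∈ Finset.range (n + 1),
        (U ^ (n - k) * (n.choose k : ℝ)) * ((u - U) ^ k * Real.exp (-lam * (u - U) ^ 2)) := by
    intro u
    have h := add_pow (u - U) U n
    rw [sub_add_cancel] at h
    rw [h, Finset.sum_mul]
    exact Finset.sum_congr rfl fun k _ => by ring
  refine (integrable_finset_sum _ (fun k _ => ((h3 k).const_mul _))).congr
    (Filter.Eventually.of_forall fun u => (key u).symm)

private lemma expK {lam : ℝ} (hlam : 0 < lam) (K : ℕ) :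
    Integrable (fun ξ : EuclideanSpace ℝ (Fin K) => Real.exp (-lam * ‖ξ‖ ^ 2)) := by
  have h := (GaussianFourier.integrable_cexp_neg_mul_sq_norm_add
    (V := EuclideanSpace ℝ (Fin K)) (b := (lam : ℂ)) (by simpa using hlam) 0 0).norm
  refine h.congr (Filter.Eventually.of_forall fun v => ?_)
  simp only [Complex.norm_exp]
  congr 1
  simp [Complex.add_re, Complex.mul_re, ← Complex.ofReal_pow]

private lemma monK {lam : ℝ} (hlam : 0 < lam) (K m : ℕ) :
    Integrable (fun ξ : EuclideanSpace ℝ (Fin K) => ‖ξ‖ ^ m * Real.exp (-lam * ‖ξ‖ ^ 2)) := by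
  have hc : (0:ℝ) < lam / 2 := by linarith
  have hCnn : (0:ℝ) ≤ (m.factorial : ℝ) * (2 / lam) ^ m := by positivity
  have hbound : ∀ t : ℝ, 0 ≤ t →
      t ^ m ≤ ((m.factorial : ℝ) * (2 / lam) ^ m + 1) * Real.exp (lam / 2 * t ^ 2) := by
    intro t ht
    have hexp1 : (1:ℝ) ≤ Real.exp (lam / 2 * t ^ 2) := by
      rw [← Real.exp_zero]; exact Real.exp_le_exp.mpr (by positivity)
    rcases le_total t 1 with h | h
    · have h1 : t ^ m ≤ 1 := pow_le_one₀ ht h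
      nlinarith
    · have h1 : t ^ m ≤ t ^ (2 * m) := pow_le_pow_right₀ h (by omega)
      have h2 : (lam / 2 * t ^ 2) ^ m ≤ Real.exp (lam / 2 * t ^ 2) * (m.factorial : ℝ) := by
        have := Real.pow_div_factorial_le_exp (lam / 2 * t ^ 2) (by positivity) m
        have hfac : (0:ℝ) < (m.factorial : ℝ) := by positivity
        rw [div_le_iff₀ hfac] at this
        linarith
      have hmul : ((2:ℝ) / lam) ^ m * (lam / 2 * t ^ 2) ^ m = (t ^ 2) ^ m := by
        rw [← mul_pow]
        congr 1
        field_simp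
      have h3 : (t ^ 2) ^ m ≤ ((2:ℝ) / lam) ^ m * (Real.exp (lam / 2 * t ^ 2) * (m.factorial : ℝ)) := by
        rw [← hmul]
        exact mul_le_mul_of_nonneg_left h2 (by positivity)
      have h4 : t ^ (2 * m) = (t ^ 2) ^ m := by rw [pow_mul]
      calc t ^ m ≤ (t ^ 2) ^ m := by rw [← h4]; exact h1
        _ ≤ ((2:ℝ) / lam) ^ m * (Real.exp (lam / 2 * t ^ 2) * (m.factorial : ℝ)) := h3
        _ ≤ ((m.factorial : ℝ) * (2 / lam) ^ m + 1) * Real.exp (lam / 2 * t ^ 2) := by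
            nlinarith [Real.exp_pos (lam / 2 * t ^ 2)]
  refine ((expK hc K).const_mul ((m.factorial : ℝ) * (2 / lam) ^ m + 1)).mono' ?_
    (Filter.Eventually.of_forall fun ξ => ?_)
  · exact ((continuous_norm.pow m).mul (by fun_prop)).aestronglyMeasurable
  · rw [norm_mul, norm_pow, norm_norm, Real.norm_eq_abs, Real.abs_exp]
    have hb := hbound ‖ξ‖ (norm_nonneg ξ)
    have key : Real.exp (lam / 2 * ‖ξ‖ ^ 2) * Real.exp (-lam * ‖ξ‖ ^ 2)
        = Real.exp (-(lam / 2) * ‖ξ‖ ^ 2) := by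
      rw [← Real.exp_add]; congr 1; ring
    calc ‖ξ‖ ^ m * Real.exp (-lam * ‖ξ‖ ^ 2)
        ≤ (((m.factorial : ℝ) * (2 / lam) ^ m + 1) * Real.exp (lam / 2 * ‖ξ‖ ^ 2))
            * Real.exp (-lam * ‖ξ‖ ^ 2) :=
          mul_le_mul_of_nonneg_right hb (Real.exp_pos _).le
      _ = ((m.factorial : ℝ) * (2 / lam) ^ m + 1) * Real.exp (-(lam / 2) * ‖ξ‖ ^ 2) := by
          rw [mul_assoc, key]

private lemma monProd {lam : ℝ} (hlam : 0 < lam) (U : ℝ) (K n m : ℕ) :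
    Integrable (fun p : ℝ × EuclideanSpace ℝ (Fin K) =>
      p.1 ^ n * ‖p.2‖ ^ m * Real.exp (-lam * ((p.1 - U) ^ 2 + ‖p.2‖ ^ 2))) := by
  have h := (mon1d hlam U n).mul_prod (monK hlam K m)
  rw [← Measure.volume_eq_prod] at h
  refine h.congr (Filter.Eventually.of_forall fun p => ?_)
  have hsplit : Real.exp (-lam * ((p.1 - U) ^ 2 + ‖p.2‖ ^ 2))
      = Real.exp (-lam * (p.1 - U) ^ 2) * Real.exp (-lam * ‖p.2‖ ^ 2) := by
    rw [← Real.exp_add]; congr 1; ring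
  show p.1 ^ n * Real.exp (-lam * (p.1 - U) ^ 2) * (‖p.2‖ ^ m * Real.exp (-lam * ‖p.2‖ ^ 2))
      = p.1 ^ n * ‖p.2‖ ^ m * Real.exp (-lam * ((p.1 - U) ^ 2 + ‖p.2‖ ^ 2))
  rw [hsplit]; ring

private lemma GG {lam : ℝ} (hlam : 0 < lam) (U : ℝ) (K e : ℕ)
    (x0 x1 x2 y0 y1 y2 : ℝ) :
    Integrable (fun p : ℝ × EuclideanSpace ℝ (Fin K) =>
      (x0 + x1 * p.1 + x2 * ((1 / 2) * (p.1 ^ 2 + ‖p.2‖ ^ 2))) *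
        (y0 + y1 * p.1 + y2 * ((1 / 2) * (p.1 ^ 2 + ‖p.2‖ ^ 2))) * p.1 ^ e *
        Real.exp (-lam * ((p.1 - U) ^ 2 + ‖p.2‖ ^ 2))) := by
  have M : ∀ n m : ℕ, Integrable (fun p : ℝ × EuclideanSpace ℝ (Fin K) =>
      p.1 ^ n * ‖p.2‖ ^ m * Real.exp (-lam * ((p.1 - U) ^ 2 + ‖p.2‖ ^ 2))) :=
    fun n m => monProd hlam U K n m
  have h : Integrable (fun p : ℝ × EuclideanSpace ℝ (Fin K) =>
      (x0 * y0) * (p.1 ^ e * ‖p.2‖ ^ 0 * Real.exp (-lam * ((p.1 - U) ^ 2 + ‖p.2‖ ^ 2)))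
    + (x0 * y1 + x1 * y0) * (p.1 ^ (e+1) * ‖p.2‖ ^ 0 * Real.exp (-lam * ((p.1 - U) ^ 2 + ‖p.2‖ ^ 2)))
    + (x1 * y1 + (x0 * y2 + x2 * y0) / 2) * (p.1 ^ (e+2) * ‖p.2‖ ^ 0 * Real.exp (-lam * ((p.1 - U) ^ 2 + ‖p.2‖ ^ 2)))
    + ((x0 * y2 + x2 * y0) / 2) * (p.1 ^ e * ‖p.2‖ ^ 2 * Real.exp (-lam * ((p.1 - U) ^ 2 + ‖p.2‖ ^ 2)))
    + ((x1 * y2 + x2 * y1) / 2) * (p.1 ^ (e+3) * ‖p.2‖ ^ 0 * Real.exp (-lam * ((p.1 - U) ^ 2 + ‖p.2‖ ^ 2)))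
    + ((x1 * y2 + x2 * y1) / 2) * (p.1 ^ (e+1) * ‖p.2‖ ^ 2 * Real.exp (-lam * ((p.1 - U) ^ 2 + ‖p.2‖ ^ 2)))
    + (x2 * y2 / 4) * (p.1 ^ (e+4) * ‖p.2‖ ^ 0 * Real.exp (-lam * ((p.1 - U) ^ 2 + ‖p.2‖ ^ 2)))
    + (x2 * y2 / 2) * (p.1 ^ (e+2) * ‖p.2‖ ^ 2 * Real.exp (-lam * ((p.1 - U) ^ 2 + ‖p.2‖ ^ 2)))
    + (x2 * y2 / 4) * (p.1 ^ e * ‖p.2‖ ^ 4 * Real.exp (-lam * ((p.1 - U) ^ 2 + ‖p.2‖ ^ 2)))) := by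
    exact (((((((((M e 0).const_mul _).add ((M (e+1) 0).const_mul _)).add
      ((M (e+2) 0).const_mul _)).add ((M e 2).const_mul _)).add
      ((M (e+3) 0).const_mul _)).add ((M (e+1) 2).const_mul _)).add
      ((M (e+4) 0).const_mul _)).add ((M (e+2) 2).const_mul _)).add ((M e 4).const_mul _)
  refine h.congr (Filter.Eventually.of_forall fun p => ?_)
  ring
theorem maxwellian_compatibility_unique_solution
    (ρ lam U : ℝ) (K : ℕ) (hρ : 0 < ρ) (hlam : 0 < lam)
    (g : ℝ × EuclideanSpace ℝ (Fin K) → ℝ)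
    (hg : ∀ (u : ℝ) (ξ : EuclideanSpace ℝ (Fin K)),
      g (u, ξ) = ρ * (lam / π) ^ (((K : ℝ) + 1) / 2) *
        Real.exp (-lam * ((u - U) ^ 2 + ‖ξ‖ ^ 2)))
    (ψ : Fin 3 → ℝ × EuclideanSpace ℝ (Fin K) → ℝ)
    (hψ0 : ∀ p, ψ 0 p = 1)
    (hψ1 : ∀ p, ψ 1 p = p.1)
    (hψ2 : ∀ p, ψ 2 p = (1 / 2) * (p.1 ^ 2 + ‖p.2‖ ^ 2))
    (a₁ a₂ a₃ : ℝ)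
    (a : ℝ × EuclideanSpace ℝ (Fin K) → ℝ)
    (ha : ∀ p, a p = a₁ + a₂ * p.1 + a₃ * ((1 / 2) * (p.1 ^ 2 + ‖p.2‖ ^ 2))) :
    ∃! A : Fin 3 → ℝ, ∀ α : Fin 3,
      ∫ p : ℝ × EuclideanSpace ℝ (Fin K),
        (a p * p.1 + (A 0 + A 1 * p.1 + A 2 * ((1 / 2) * (p.1 ^ 2 + ‖p.2‖ ^ 2)))) *
          ψ α p * g p = 0 := by
  have hg' : ∀ p : ℝ × EuclideanSpace ℝ (Fin K),
      g p = ρ * (lam / π) ^ (((K : ℝ) + 1) / 2) *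
        Real.exp (-lam * ((p.1 - U) ^ 2 + ‖p.2‖ ^ 2)) :=
    fun p => by rw [← hg p.1 p.2]
  have hgpos : ∀ p, 0 < g p := fun p => by
    rw [hg' p]
    have h1 : 0 < lam / π := div_pos hlam pi_pos
    positivity
  have HI : ∀ f : ℝ × EuclideanSpace ℝ (Fin K) → ℝ,
      Integrable (fun p => f p * Real.exp (-lam * ((p.1 - U) ^ 2 + ‖p.2‖ ^ 2))) →
      Integrable (fun p => f p * g p) := by
    intro f h
    refine (h.const_mul (ρ * (lam / π) ^ (((K : ℝ) + 1) / 2))).congr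
      (Filter.Eventually.of_forall fun p => ?_)
    show ρ * (lam / π) ^ (((K : ℝ) + 1) / 2) *
        (f p * Real.exp (-lam * ((p.1 - U) ^ 2 + ‖p.2‖ ^ 2))) = f p * g p
    rw [hg' p]; ring
  have hψ0' : ∀ p, ψ ⟨0, by norm_num⟩ p = 1 := hψ0
  have hψ1' : ∀ p, ψ ⟨1, by norm_num⟩ p = p.1 := hψ1
  have hψ2' : ∀ p, ψ ⟨2, by norm_num⟩ p = (1 / 2) * (p.1 ^ 2 + ‖p.2‖ ^ 2) := hψ2
  have HQ : ∀ i j : Fin 3, Integrable (fun p => ψ i p * ψ j p * g p) := by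
    intro i j
    refine HI (fun p => ψ i p * ψ j p) ?_
    fin_cases i <;> fin_cases j
    · exact (GG hlam U K 0 1 0 0 1 0 0).congr
        (Filter.Eventually.of_forall fun p => by simp only [hψ0, hψ0']; ring)
    · exact (GG hlam U K 0 1 0 0 0 1 0).congr
        (Filter.Eventually.of_forall fun p => by simp only [hψ0, hψ1, hψ0', hψ1']; ring)
    · exact (GG hlam U K 0 1 0 0 0 0 1).congr
        (Filter.Eventually.of_forall fun p => by simp only [hψ0, hψ2, hψ0', hψ2']; ring)
    · exact (GG hlam U K 0 0 1 0 1 0 0).congr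
        (Filter.Eventually.of_forall fun p => by simp only [hψ0, hψ1, hψ0', hψ1']; ring)
    · exact (GG hlam U K 0 0 1 0 0 1 0).congr
        (Filter.Eventually.of_forall fun p => by simp only [hψ1, hψ1']; ring)
    · exact (GG hlam U K 0 0 1 0 0 0 1).congr
        (Filter.Eventually.of_forall fun p => by simp only [hψ1, hψ2, hψ1', hψ2']; ring)
    · exact (GG hlam U K 0 0 0 1 1 0 0).congr
        (Filter.Eventually.of_forall fun p => by simp only [hψ0, hψ2, hψ0', hψ2']; ring)
    · exact (GG hlam U K 0 0 0 1 0 1 0).congr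
        (Filter.Eventually.of_forall fun p => by simp only [hψ1, hψ2, hψ1', hψ2']; ring)
    · exact (GG hlam U K 0 0 0 1 0 0 1).congr
        (Filter.Eventually.of_forall fun p => by simp only [hψ2, hψ2']; ring)
  have HA : ∀ j : Fin 3, Integrable (fun p => a p * p.1 * ψ j p * g p) := by
    intro j
    refine HI (fun p => a p * p.1 * ψ j p) ?_
    fin_cases j
    · exact (GG hlam U K 1 a₁ a₂ a₃ 1 0 0).congr
        (Filter.Eventually.of_forall fun p => by simp only [hψ0, hψ0', ha]; ring)
    · exact (GG hlam U K 1 a₁ a₂ a₃ 0 1 0).congr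
        (Filter.Eventually.of_forall fun p => by simp only [hψ1, hψ1', ha]; ring)
    · exact (GG hlam U K 1 a₁ a₂ a₃ 0 0 1).congr
        (Filter.Eventually.of_forall fun p => by simp only [hψ2, hψ2', ha]; ring)
  let Mm : Matrix (Fin 3) (Fin 3) ℝ := fun α i => ∫ p, ψ i p * ψ α p * g p
  let cv : Fin 3 → ℝ := fun α => ∫ p, a p * p.1 * ψ α p * g p
  have hMm : ∀ α i, Mm α i = ∫ p, ψ i p * ψ α p * g p := fun α i => rfl
  have hmv : ∀ (A : Fin 3 → ℝ) (α : Fin 3), Mm.mulVec A α = ∑ i, Mm α i * A i :=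
    fun A α => rfl
  have hcond : ∀ (A : Fin 3 → ℝ) (α : Fin 3),
      (∫ p : ℝ × EuclideanSpace ℝ (Fin K),
        (a p * p.1 + (A 0 + A 1 * p.1 + A 2 * ((1 / 2) * (p.1 ^ 2 + ‖p.2‖ ^ 2)))) *
          ψ α p * g p)
        = cv α + ∑ i, Mm α i * A i := by
    intro A α
    have h1 : (fun p : ℝ × EuclideanSpace ℝ (Fin K) =>
        (a p * p.1 + (A 0 + A 1 * p.1 + A 2 * ((1 / 2) * (p.1 ^ 2 + ‖p.2‖ ^ 2)))) *
          ψ α p * g p)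
        = fun p => a p * p.1 * ψ α p * g p + ∑ i, A i * (ψ i p * ψ α p * g p) := by
      funext p
      rw [Fin.sum_univ_three, hψ0, hψ1, hψ2]
      ring
    rw [h1, integral_add (HA α) (integrable_finset_sum _ fun i _ => (HQ i α).const_mul (A i)),
      integral_finset_sum _ (fun i _ => (HQ i α).const_mul (A i))]
    simp_rw [integral_const_mul]
    congr 1
    exact Finset.sum_congr rfl fun i _ => mul_comm _ _
  have hinj : Function.Injective Mm.mulVecLin := by
    rw [← LinearMap.ker_eq_bot, LinearMap.ker_eq_bot']
    intro D hD
    have hD' : ∀ α, ∑ i, Mm α i * D i = 0 := by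
      intro α
      have h := congrFun hD α
      simpa [Matrix.mulVecLin_apply, hmv] using h
    set f : ℝ × EuclideanSpace ℝ (Fin K) → ℝ :=
      fun p => D 0 + D 1 * p.1 + D 2 * ((1 / 2) * (p.1 ^ 2 + ‖p.2‖ ^ 2)) with hf
    have hfint : Integrable (fun p => f p ^ 2 * g p) := by
      refine HI (fun p => f p ^ 2) ?_
      exact (GG hlam U K 0 (D 0) (D 1) (D 2) (D 0) (D 1) (D 2)).congr
        (Filter.Eventually.of_forall fun p => by simp only [hf]; ring)
    have hexp : (fun p : ℝ × EuclideanSpace ℝ (Fin K) => f p ^ 2 * g p)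
        = fun p => ∑ α : Fin 3, ∑ i : Fin 3, (D α * D i) * (ψ i p * ψ α p * g p) := by
      funext p
      simp only [Fin.sum_univ_three, hψ0, hψ1, hψ2, hf]
      ring
    have hzero : ∫ p, f p ^ 2 * g p = 0 := by
      rw [hexp, integral_finset_sum _
        (fun α _ => integrable_finset_sum _ fun i _ => (HQ i α).const_mul _)]
      have hval : ∀ α : Fin 3, (∫ p, ∑ i : Fin 3, (D α * D i) * (ψ i p * ψ α p * g p))
          = D α * ∑ i, Mm α i * D i := by
        intro α
        rw [integral_finset_sum _ (fun i _ => (HQ i α).const_mul _)]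
        simp_rw [integral_const_mul]
        rw [Finset.mul_sum]
        exact Finset.sum_congr rfl fun i _ => by rw [hMm]; ring
      simp [hval, hD']
    have hae : (fun p => f p ^ 2 * g p) =ᵐ[volume] 0 :=
      (integral_eq_zero_iff_of_nonneg
        (fun p => mul_nonneg (sq_nonneg _) (hgpos p).le) hfint).mp hzero
    have hfz : f =ᵐ[volume] (fun _ => 0) := by
      filter_upwards [hae] with p hp
      have hp' : f p ^ 2 * g p = 0 := hp
      have hsq : f p ^ 2 = 0 := by
        rcases mul_eq_zero.mp hp' with h | h
        · exact h
        · exact absurd h (hgpos p).ne'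
      exact pow_eq_zero_iff (two_ne_zero) |>.mp hsq
    have hcont : Continuous f := by rw [hf]; fun_prop
    haveI : (volume : Measure (ℝ × EuclideanSpace ℝ (Fin K))).IsOpenPosMeasure := by
      rw [Measure.volume_eq_prod]; infer_instance
    have hfeq : f = fun _ => 0 :=
      (Continuous.ae_eq_iff_eq volume hcont continuous_const).mp hfz
    have e0 := congrFun hfeq ((0 : ℝ), (0 : EuclideanSpace ℝ (Fin K)))
    have e1 := congrFun hfeq ((1 : ℝ), (0 : EuclideanSpace ℝ (Fin K)))
    have e2 := congrFun hfeq ((-1 : ℝ), (0 : EuclideanSpace ℝ (Fin K)))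
    simp only [hf] at e0 e1 e2
    norm_num [norm_zero] at e0 e1 e2
    funext j
    fin_cases j
    · simpa using e0
    · show D 1 = 0
      linarith
    · show D 2 = 0
      linarith
  obtain ⟨A, hA⟩ := LinearMap.injective_iff_surjective.mp hinj (fun α => -cv α)
  refine ⟨A, fun α => ?_, fun B hB => ?_⟩
  · rw [hcond A α]
    have h := congrFun hA α
    rw [Matrix.mulVecLin_apply] at h
    rw [hmv] at h
    linarith [h]
  · apply hinj
    rw [hA]
    funext α
    rw [Matrix.mulVecLin_apply, hmv]
    have h := hB α
    rw [hcond B α] at h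
    linarith
end
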